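/- arXiv:1404.3778 — 4 statements merged into one kernel-verified Lean document; each statement's English description precedes it below -/
import Mathlib

section
/- Let w ∈ ℂ with Re(w) ≤ 0 and let n be a natural number with n > |w| + |w|²·max(1, e/ε) for some ε > 0. Then |(1 + w/n)^n − exp(w)| < ε. -/
lemma aux_pow_sub_pow (a b : ℂ) (M : ℝ) (ha : ‖a‖ ≤ M)
    (hb : ‖b‖ ≤ M) (n : ℕ) :
    ‖a ^ n - b ^ n‖ ≤ n * M ^ (n - 1) * ‖a - b‖ := by
  have hM : 0 ≤ M := le_trans (norm_nonneg a) ha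
  rw [← Commute.geom_sum₂_mul (Commute.all a b) n, norm_mul]
  have hsum : ‖∑ i ∈ Finset.range n, a ^ i * b ^ (n - 1 - i)‖ ≤
      n * M ^ (n - 1) := by
    calc ‖∑ i ∈ Finset.range n, a ^ i * b ^ (n - 1 - i)‖
        ≤ ∑ i ∈ Finset.range n, ‖a ^ i * b ^ (n - 1 - i)‖ :=
          norm_sum_le _ _
      _ ≤ ∑ _i ∈ Finset.range n, M ^ (n - 1) := by
          apply Finset.sum_le_sum
          intro i hi
          rw [Finset.mem_range] at hi
          have hile : i ≤ n - 1 := Nat.le_pred_of_lt hi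
          rw [norm_mul, norm_pow, norm_pow]
          calc ‖a‖ ^ i * ‖b‖ ^ (n - 1 - i)
              ≤ M ^ i * M ^ (n - 1 - i) := by
                gcongr <;> exact norm_nonneg _
            _ = M ^ (n - 1) := by
                rw [← pow_add, Nat.add_sub_cancel' hile]
      _ = n * M ^ (n - 1) := by
          rw [Finset.sum_const, Finset.card_range, nsmul_eq_mul]
  exact mul_le_mul_of_nonneg_right hsum (norm_nonneg _)

set_option maxHeartbeats 1000000 in
theorem stmt1 (w : ℂ) (hw : w.re ≤ 0) (ε : ℝ) (hε : 0 < ε) (n : ℕ)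
    (hn : ‖w‖ + ‖w‖ ^ 2 * max 1 (Real.exp 1 / ε) < n) :
    ‖(1 + w / n) ^ n - Complex.exp w‖ < ε := by
  set B : ℝ := ‖w‖ with hB
  have habs : 0 ≤ B := norm_nonneg w
  have hmax1 : (1 : ℝ) ≤ max 1 (Real.exp 1 / ε) := le_max_left _ _
  have hw2 : B ^ 2 ≤ B ^ 2 * max 1 (Real.exp 1 / ε) :=
    le_mul_of_one_le_right (by positivity) hmax1
  have hNw : B < n := lt_of_le_of_lt (by nlinarith) hn
  have hNw2 : B ^ 2 < n := lt_of_le_of_lt (by nlinarith) hn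
  have hN : (0 : ℝ) < n := lt_of_le_of_lt habs hNw
  have hNne : (n : ℂ) ≠ 0 := by
    exact_mod_cast ne_of_gt (show (0:ℝ) < n from hN)
  set N : ℝ := (n : ℝ) with hNdef
  set z : ℂ := w / n with hz
  have hzabs : ‖z‖ = B / N := by
    rw [hz, norm_div, Complex.norm_natCast, hB]
  have hzre : z.re = w.re / N := by rw [hz, Complex.div_natCast_re]
  have hzle1 : ‖z‖ ≤ 1 := by
    rw [hzabs, div_le_one hN]; exact hNw.le
  set M : ℝ := Real.exp (B ^ 2 / (2 * N ^ 2)) with hM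
  have hMpos : 0 < M := Real.exp_pos _
  have hM1 : 1 ≤ M := Real.one_le_exp (by positivity)
  -- |exp z| ≤ M
  have ha : ‖Complex.exp z‖ ≤ M := by
    rw [Complex.norm_exp]
    refine le_trans ?_ hM1
    rw [← Real.exp_zero]
    apply Real.exp_le_exp.mpr
    rw [hzre]
    exact div_nonpos_of_nonpos_of_nonneg hw hN.le
  -- |1 + z| ≤ M
  have hb : ‖1 + z‖ ≤ M := by
    have hsq : ‖1 + z‖ ^ 2 ≤ M ^ 2 := by
      rw [Complex.sq_norm, Complex.normSq_apply]
      have h1 : (1 + z).re = 1 + z.re := by simp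
      have h2 : (1 + z).im = z.im := by simp
      rw [h1, h2]
      have hzsq : z.re ^ 2 + z.im ^ 2 = B ^ 2 / N ^ 2 := by
        have := Complex.sq_norm z
        rw [Complex.normSq_apply, hzabs, div_pow] at this
        nlinarith [this]
      have hzrele : z.re ≤ 0 := by
        rw [hzre]; exact div_nonpos_of_nonpos_of_nonneg hw hN.le
      have hMsq : M ^ 2 = Real.exp (B ^ 2 / N ^ 2) := by
        rw [hM, ← Real.exp_nat_mul]
        norm_num
        ring_nf
      rw [hMsq]
      have hle : 1 + B ^ 2 / N ^ 2 ≤ Real.exp (B ^ 2 / N ^ 2) := by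
        have := Real.add_one_le_exp (B ^ 2 / N ^ 2)
        linarith
      nlinarith [hzsq, hzrele, hle]
    nlinarith [hsq, norm_nonneg (1 + z), hMpos.le]
  -- exp w = (exp z)^n
  have hexp : Complex.exp w = Complex.exp z ^ n := by
    rw [← Complex.exp_nat_mul, hz, mul_div_cancel₀ _ hNne]
  have key := aux_pow_sub_pow (Complex.exp z) (1 + z) M ha hb n
  have hab : ‖Complex.exp z - (1 + z)‖ ≤ B ^ 2 / N ^ 2 := by
    have h1 := Complex.norm_exp_sub_one_sub_id_le hzle1
    have heq : Complex.exp z - (1 + z) = Complex.exp z - 1 - z := by ring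
    rw [heq]
    calc ‖Complex.exp z - 1 - z‖ ≤ ‖z‖ ^ 2 := h1
      _ = B ^ 2 / N ^ 2 := by rw [hzabs, div_pow]
  have hMn : M ^ (n - 1) ≤ Real.exp 1 := by
    rw [hM, ← Real.exp_nat_mul]
    apply Real.exp_le_exp.mpr
    have h1 : ((n - 1 : ℕ) : ℝ) ≤ N := by
      rw [hNdef]; exact_mod_cast Nat.sub_le n 1
    have hcast0 : (0:ℝ) ≤ ((n - 1 : ℕ) : ℝ) := Nat.cast_nonneg _
    rw [← mul_div_assoc, div_le_one (by positivity)]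
    nlinarith [hNw2, hN]
  calc ‖(1 + z) ^ n - Complex.exp w‖
      = ‖Complex.exp z ^ n - (1 + z) ^ n‖ := by
        rw [hexp, norm_sub_rev]
    _ ≤ N * M ^ (n - 1) * ‖Complex.exp z - (1 + z)‖ := key
    _ ≤ N * Real.exp 1 * (B ^ 2 / N ^ 2) := by
        gcongr
    _ < ε := by
        have hkey : B ^ 2 * (Real.exp 1 / ε) < N := by
          refine lt_of_le_of_lt ?_ hn
          have := le_max_right 1 (Real.exp 1 / ε)
          nlinarith [habs, sq_nonneg B, Real.exp_pos 1]
        have hkey' : B ^ 2 * Real.exp 1 / ε < N := by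
          rwa [mul_div_assoc]
        have h2 : B ^ 2 * Real.exp 1 < N * ε := (div_lt_iff₀ hε).mp hkey'
        rw [show N * Real.exp 1 * (B ^ 2 / N ^ 2) = B ^ 2 * Real.exp 1 / N by
          field_simp, div_lt_iff₀ hN]
        nlinarith [h2]
end

section
/- Define t_n(y) = (1 + s_n(y)²/n)^n where s_n(y) = n·(exp(πiy/n) − 1). Then for every y ∈ ℝ, lim_{n→∞} t_n(y) = exp(−π²y²), and the convergence is uniform on every bounded interval of ℝ. -/
noncomputable def sSeq (n : ℕ) (y : ℝ) : ℂ :=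
  (n : ℂ) * (Complex.exp (Real.pi * Complex.I * y / n) - 1)

noncomputable def tSeq (n : ℕ) (y : ℝ) : ℂ :=
  (1 + (sSeq n y) ^ 2 / n) ^ n

open Complex Filter

set_option maxHeartbeats 1000000 in
lemma core (N : ℝ) (hN : 0 < N) (n : ℕ)
    (hn : 24 * (Real.pi * N + 1) ^ 4 ≤ (n : ℝ)) (y : ℝ) (hy : |y| ≤ N) :
    ‖tSeq n y - ((Real.exp (-(Real.pi ^ 2) * y ^ 2) : ℝ) : ℂ)‖ ≤
      (32 * (Real.pi * N) ^ 4 + 6 * (Real.pi * N) ^ 3) / n := by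
  have hπ := Real.pi_pos
  set K : ℝ := Real.pi * N with hKdef
  have hK : 0 < K := mul_pos hπ hN
  have hexp4 : 24 * (K + 1) ^ 4
      = 24 * K ^ 4 + 96 * K ^ 3 + 144 * K ^ 2 + 96 * K + 24 := by ring
  rw [hexp4] at hn
  have hK4 : 0 ≤ K ^ 4 := by positivity
  have hK3 : 0 ≤ K ^ 3 := by positivity
  have hK2' : 0 ≤ K ^ 2 := by positivity
  have hn1 : (1 : ℝ) ≤ (n : ℝ) := by nlinarith
  have hnpos : (0 : ℝ) < (n : ℝ) := by linarith
  have hn0 : (n : ℂ) ≠ 0 := by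
    exact_mod_cast (ne_of_gt (by exact_mod_cast hnpos : (0:ℕ) < n))
  have hnK : K ≤ (n : ℝ) := by nlinarith
  have hnK2 : 8 * K ^ 2 ≤ (n : ℝ) := by nlinarith
  have hnK4 : 16 * K ^ 4 + 3 * K ^ 3 ≤ (n : ℝ) := by nlinarith
  set θ : ℝ := Real.pi * y / n with hθdef
  have hθ : |θ| ≤ K / n := by
    have h1 : |θ| = Real.pi * |y| / n := by
      rw [hθdef, abs_div, abs_mul, _root_.abs_of_nonneg hπ.le, Nat.abs_cast]
    have h2 : Real.pi * |y| ≤ K := by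
      simpa [hKdef] using mul_le_mul_of_nonneg_left hy hπ.le
    rw [h1]
    gcongr
  have hθ1 : |θ| ≤ 1 := hθ.trans (by rw [div_le_one hnpos]; exact hnK)
  have hw : (Real.pi : ℂ) * Complex.I * y / n = (θ : ℂ) * Complex.I := by
    rw [hθdef]; push_cast; field_simp
  have habsθ : ‖(θ : ℂ) * Complex.I‖ = |θ| := by
    rw [norm_mul, Complex.norm_I, Complex.norm_real, Real.norm_eq_abs, mul_one]
  -- step 1: |s - πy i| ≤ K²/n
  have hs1 : ‖sSeq n y - ((Real.pi * y : ℝ) : ℂ) * Complex.I‖ ≤ K ^ 2 / n := by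
    have hb := Complex.norm_exp_sub_one_sub_id_le (x := (θ : ℂ) * Complex.I)
      (by rw [habsθ]; exact hθ1)
    have heq : sSeq n y - ((Real.pi * y : ℝ) : ℂ) * Complex.I
        = (n : ℂ) * (Complex.exp ((θ : ℂ) * Complex.I) - 1 - (θ : ℂ) * Complex.I) := by
      rw [sSeq, hw, hθdef]
      push_cast
      field_simp
    rw [heq, norm_mul]
    have : ‖(n : ℂ)‖ = (n : ℝ) := by
      rw [Complex.norm_natCast]
    rw [this, habsθ] at *
    calc (n : ℝ) * ‖Complex.exp ((θ:ℂ) * Complex.I) - 1 - (θ:ℂ) * Complex.I‖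
        ≤ (n : ℝ) * |θ| ^ 2 := by
          apply mul_le_mul_of_nonneg_left _ hnpos.le
          simpa [habsθ] using hb
      _ ≤ (n : ℝ) * (K / n) ^ 2 := by
          apply mul_le_mul_of_nonneg_left _ hnpos.le
          exact pow_le_pow_left₀ (abs_nonneg θ) hθ 2
      _ = K ^ 2 / n := by field_simp
  have habsπy : ‖((Real.pi * y : ℝ) : ℂ) * Complex.I‖ ≤ K := by
    rw [norm_mul, Complex.norm_I, Complex.norm_real, Real.norm_eq_abs, mul_one, abs_mul,
      _root_.abs_of_nonneg hπ.le]
    calc Real.pi * |y| ≤ Real.pi * N := by gcongr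
      _ = K := rfl
  have hK2n : K ^ 2 / n ≤ K := by
    rw [div_le_iff₀ hnpos]; nlinarith
  have hs2 : ‖sSeq n y‖ ≤ 2 * K := by
    calc ‖sSeq n y‖
        = ‖(sSeq n y - ((Real.pi * y : ℝ) : ℂ) * Complex.I)
            + ((Real.pi * y : ℝ) : ℂ) * Complex.I‖ := by ring_nf
      _ ≤ ‖sSeq n y - ((Real.pi * y : ℝ) : ℂ) * Complex.I‖
            + ‖((Real.pi * y : ℝ) : ℂ) * Complex.I‖ := norm_add_le _ _
      _ ≤ K ^ 2 / n + K := add_le_add hs1 habsπy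
      _ ≤ 2 * K := by linarith
  have hs3 : ‖sSeq n y + ((Real.pi * y : ℝ) : ℂ) * Complex.I‖ ≤ 3 * K := by
    calc ‖sSeq n y + ((Real.pi * y : ℝ) : ℂ) * Complex.I‖
        ≤ ‖sSeq n y‖ + ‖((Real.pi * y : ℝ) : ℂ) * Complex.I‖ :=
          norm_add_le _ _
      _ ≤ 2 * K + K := add_le_add hs2 habsπy
      _ = 3 * K := by ring
  have hbval : ((Real.exp (-(Real.pi ^ 2) * y ^ 2) : ℝ) : ℂ)
      = Complex.exp (((-(Real.pi ^ 2) * y ^ 2 : ℝ)) : ℂ) := Complex.ofReal_exp _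
  have hsqid : (((-(Real.pi ^ 2) * y ^ 2 : ℝ)) : ℂ) = (((Real.pi * y : ℝ) : ℂ) * Complex.I) ^ 2 := by
    rw [mul_pow, Complex.I_sq]
    push_cast
    ring
  have hsq : ‖sSeq n y ^ 2 - (((-(Real.pi ^ 2) * y ^ 2 : ℝ)) : ℂ)‖ ≤ 3 * K ^ 3 / n := by
    rw [hsqid]
    have : sSeq n y ^ 2 - (((Real.pi * y : ℝ) : ℂ) * Complex.I) ^ 2
        = (sSeq n y - ((Real.pi * y : ℝ) : ℂ) * Complex.I)
          * (sSeq n y + ((Real.pi * y : ℝ) : ℂ) * Complex.I) := by ring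
    rw [this, norm_mul]
    calc ‖sSeq n y - ((Real.pi * y:ℝ):ℂ) * Complex.I‖
          * ‖sSeq n y + ((Real.pi * y:ℝ):ℂ) * Complex.I‖
        ≤ (K ^ 2 / n) * (3 * K) := by
          apply mul_le_mul hs1 hs3 (norm_nonneg _) (by positivity)
      _ = 3 * K ^ 3 / n := by ring
  set z : ℂ := sSeq n y ^ 2 / n with hzdef
  have hz : ‖z‖ ≤ 4 * K ^ 2 / n := by
    rw [hzdef, norm_div, norm_pow, Complex.norm_natCast]
    gcongr
    nlinarith [norm_nonneg (sSeq n y)]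
  have hzhalf : ‖z‖ ≤ 1 / 2 := by
    refine hz.trans ?_
    rw [div_le_div_iff₀ hnpos (by norm_num : (0:ℝ) < 2)]
    nlinarith
  have h1z : (1 : ℂ) + z ≠ 0 := by
    intro h
    have : z = -1 := by linear_combination h
    rw [this] at hzhalf
    simp at hzhalf
    linarith
  have hteq : tSeq n y = Complex.exp ((n : ℂ) * Complex.log (1 + z)) := by
    rw [tSeq, Complex.exp_nat_mul, Complex.exp_log h1z]
  have hlog : ‖(n : ℂ) * Complex.log (1 + z) - (n : ℂ) * z‖ ≤ 16 * K ^ 4 / n := by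
    have hlt : ‖z‖ < 1 := by
      linarith
    have hb := Complex.norm_log_one_add_sub_self_le hlt
    have hinv : (1 - ‖z‖)⁻¹ ≤ 2 := by
      have h1 : (1:ℝ)/2 ≤ 1 - ‖z‖ := by linarith
      calc (1 - ‖z‖)⁻¹ ≤ ((1:ℝ)/2)⁻¹ := by
            apply inv_anti₀ (by norm_num) h1
        _ = 2 := by norm_num
    have hb2 : ‖Complex.log (1 + z) - z‖ ≤ ‖z‖ ^ 2 := by
      refine hb.trans ?_
      calc ‖z‖ ^ 2 * (1 - ‖z‖)⁻¹ / 2 ≤ ‖z‖ ^ 2 * 2 / 2 := by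
            gcongr
            all_goals first | exact hinv | positivity
        _ = ‖z‖ ^ 2 := by ring
    calc ‖(n : ℂ) * Complex.log (1 + z) - (n : ℂ) * z‖
        = (n : ℝ) * ‖Complex.log (1 + z) - z‖ := by
          rw [← mul_sub, norm_mul, Complex.norm_natCast]
      _ ≤ (n : ℝ) * (‖z‖ ^ 2) := by
          exact mul_le_mul_of_nonneg_left hb2 hnpos.le
      _ ≤ (n : ℝ) * ((4 * K ^ 2 / n) ^ 2) := by
          apply mul_le_mul_of_nonneg_left _ hnpos.le
          exact pow_le_pow_left₀ (norm_nonneg _) hz 2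
      _ = 16 * K ^ 4 / n := by field_simp; ring
  have hnzeq : (n : ℂ) * z = sSeq n y ^ 2 := by
    rw [hzdef]; field_simp
  set b : ℂ := (((-(Real.pi ^ 2) * y ^ 2 : ℝ)) : ℂ) with hbdef
  have h_ab : ‖(n : ℂ) * Complex.log (1 + z) - b‖
      ≤ (16 * K ^ 4 + 3 * K ^ 3) / n := by
    calc ‖(n : ℂ) * Complex.log (1 + z) - b‖
        = ‖((n : ℂ) * Complex.log (1 + z) - (n : ℂ) * z) + ((n : ℂ) * z - b)‖ := by
          ring_nf
      _ ≤ ‖(n : ℂ) * Complex.log (1 + z) - (n : ℂ) * z‖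
            + ‖(n : ℂ) * z - b‖ := norm_add_le _ _
      _ ≤ 16 * K ^ 4 / n + 3 * K ^ 3 / n := by
          refine add_le_add hlog ?_
          rw [hnzeq]; exact hsq
      _ = (16 * K ^ 4 + 3 * K ^ 3) / n := by ring
  have hable1 : ‖(n : ℂ) * Complex.log (1 + z) - b‖ ≤ 1 := by
    refine h_ab.trans ?_
    rw [div_le_one hnpos]
    exact hnK4
  have hexpb : ‖Complex.exp b‖ ≤ 1 := by
    rw [hbdef, ← Complex.ofReal_exp, Complex.norm_real, Real.norm_eq_abs,
      _root_.abs_of_nonneg (Real.exp_pos _).le]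
    rw [Real.exp_le_one_iff]
    nlinarith [sq_nonneg y, sq_nonneg Real.pi]
  calc ‖tSeq n y - ((Real.exp (-(Real.pi ^ 2) * y ^ 2) : ℝ) : ℂ)‖
      = ‖Complex.exp b‖
        * ‖Complex.exp ((n : ℂ) * Complex.log (1 + z) - b) - 1‖ := by
        rw [hteq, hbval, ← norm_mul]
        congr 1
        rw [mul_sub, ← Complex.exp_add]
        ring_nf
    _ ≤ 1 * (2 * ‖(n : ℂ) * Complex.log (1 + z) - b‖) := by
        apply mul_le_mul hexpb (Complex.norm_exp_sub_one_le hable1)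
          (norm_nonneg _) (by norm_num)
    _ ≤ 1 * (2 * ((16 * K ^ 4 + 3 * K ^ 3) / n)) := by
        apply mul_le_mul_of_nonneg_left _ (by norm_num : (0:ℝ) ≤ 1)
        linarith
    _ = (32 * K ^ 4 + 6 * K ^ 3) / n := by ring

lemma unif (N ε : ℝ) (hN : 0 < N) (hε : 0 < ε) :
    ∃ M : ℕ, ∀ n : ℕ, M ≤ n → ∀ y : ℝ, |y| ≤ N →
      ‖tSeq n y - ((Real.exp (-(Real.pi ^ 2) * y ^ 2) : ℝ) : ℂ)‖ < ε := by
  have hπ := Real.pi_pos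
  set K : ℝ := Real.pi * N with hKdef
  have hK : 0 < K := mul_pos hπ hN
  set C : ℝ := 32 * K ^ 4 + 6 * K ^ 3 with hCdef
  have hC : 0 < C := by positivity
  obtain ⟨M, hM⟩ := exists_nat_gt (max (24 * (K + 1) ^ 4) (C / ε))
  refine ⟨M, fun n hn y hy => ?_⟩
  have hMn : (M : ℝ) ≤ n := by exact_mod_cast hn
  have h1 : 24 * (K + 1) ^ 4 ≤ (n : ℝ) :=
    le_trans (le_trans (le_max_left _ _) hM.le) hMn
  have h2 : C / ε < (n : ℝ) :=
    lt_of_lt_of_le (lt_of_le_of_lt (le_max_right _ _) hM) hMn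
  have hnpos : (0 : ℝ) < n := lt_of_le_of_lt (div_nonneg hC.le hε.le) h2
  refine lt_of_le_of_lt (core N hN n h1 y hy) ?_
  rw [div_lt_iff₀ hnpos]
  calc C = (C / ε) * ε := by field_simp
    _ < (n : ℝ) * ε := by
        apply mul_lt_mul_of_pos_right h2 hε
    _ = ε * n := by ring

theorem stmt5 :
    (∀ y : ℝ, Filter.Tendsto (fun n : ℕ => tSeq n y) Filter.atTop
      (nhds ((Real.exp (-(Real.pi ^ 2) * y ^ 2) : ℝ) : ℂ))) ∧
    (∀ N ε : ℝ, 0 < N → 0 < ε → ∃ M : ℕ, ∀ n : ℕ, M ≤ n → ∀ y : ℝ, |y| ≤ N →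
      ‖tSeq n y - ((Real.exp (-(Real.pi ^ 2) * y ^ 2) : ℝ) : ℂ)‖ < ε) := by
  constructor
  · intro y
    rw [Metric.tendsto_atTop]
    intro ε hε
    obtain ⟨M, hM⟩ := unif (|y| + 1) ε (by positivity) hε
    refine ⟨M, fun n hn => ?_⟩
    rw [Complex.dist_eq]
    exact hM n hn y (by linarith [abs_nonneg y])
  · intro N ε hN hε
    exact unif N ε hN hε
end

section
/- Let t > 0 and z ∈ ℝ with z = j/n for integers j, n with 0 < j ≤ n²−1, and let Y(x) = exp(−π²tx²)·cos(πxz). Then there are constants J(t), G(t) depending only on t, and an absolute constant H, such that |(1/n)·Σ_{k=−n²}^{n²−1} Y(k/n) − ∫_ℝ Y dμ| ≤ J(t)/n + G(t)·j/n² + H·j²/n³. -/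
set_option maxHeartbeats 2000000

open MeasureTheory

theorem stmt18 :
    ∃ H : ℝ, ∀ t : ℝ, 0 < t → ∃ J G : ℝ,
      ∀ (n : ℕ) (j : ℤ), 0 < j → j ≤ (n : ℤ) ^ 2 - 1 →
        |(1 / n : ℝ) * ∑ k ∈ Finset.Icc (-(n : ℤ) ^ 2) ((n : ℤ) ^ 2 - 1),
              Real.exp (-(Real.pi ^ 2) * t * ((k : ℝ) / n) ^ 2)
                * Real.cos (Real.pi * ((k : ℝ) / n) * ((j : ℝ) / n))
            - ∫ x : ℝ, Real.exp (-(Real.pi ^ 2) * t * x ^ 2)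
                * Real.cos (Real.pi * x * ((j : ℝ) / n))|
          ≤ J / n + G * (j : ℝ) / (n : ℝ) ^ 2 + H * (j : ℝ) ^ 2 / (n : ℝ) ^ 3 := by
  refine ⟨0, fun t ht => ?_⟩
  have hpi : (0:ℝ) < Real.pi := Real.pi_pos
  set a : ℝ := Real.pi ^ 2 * t with ha_def
  have ha : 0 < a := by positivity
  set J1 : ℝ := ∫ x : ℝ, 2 * a * |x| * Real.exp (-(a * x ^ 2)) with hJ1_def
  set G2 : ℝ := ∫ x : ℝ, Real.pi * Real.exp (-(a * x ^ 2)) with hG2_def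
  set K : ℝ := ∫ x : ℝ, Real.exp (-(a / 2 * x ^ 2)) with hK_def
  refine ⟨J1 + 2 * K / a, G2, ?_⟩
  intro n j hj hjn
  -- basic numerics
  have hn2 : 2 ≤ n := by
    by_contra h
    push_neg at h
    interval_cases n <;> omega
  have hn0 : (0:ℝ) < n := by positivity
  have hn1 : (1:ℝ) ≤ n := by exact_mod_cast Nat.one_le_of_lt hn2
  have hnne : (n:ℝ) ≠ 0 := ne_of_gt hn0
  set z : ℝ := (j:ℝ) / n with hz_def
  have hz0 : 0 < z := by
    apply div_pos _ hn0
    exact_mod_cast hj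
  -- the function and its derivative
  set Y : ℝ → ℝ := fun x => Real.exp (-(a * x ^ 2)) * Real.cos (Real.pi * z * x) with hY_def
  set Y' : ℝ → ℝ := fun u =>
      Real.exp (-(a * u ^ 2)) * -(a * (2 * u)) * Real.cos (Real.pi * z * u)
        + Real.exp (-(a * u ^ 2)) * (-Real.sin (Real.pi * z * u) * (Real.pi * z)) with hY'_def
  have hYeq : ∀ x : ℝ,
      Real.exp (-(Real.pi ^ 2) * t * x ^ 2) * Real.cos (Real.pi * x * z) = Y x := by
    intro x
    rw [hY_def]
    rw [show -(Real.pi ^ 2) * t * x ^ 2 = -(a * x ^ 2) by rw [ha_def]; ring,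
        show Real.pi * x * z = Real.pi * z * x by ring]
  have hder : ∀ u : ℝ, HasDerivAt Y (Y' u) u := by
    intro u
    have h1 : HasDerivAt (fun x : ℝ => -(a * x ^ 2)) (-(a * (2 * u))) u := by
      have := ((hasDerivAt_pow 2 u).const_mul a).neg
      exact this.congr_deriv (by rw [show (2:ℕ) - 1 = 1 from rfl, pow_one]; simp)
    have h2 := h1.exp
    have h3 : HasDerivAt (fun x : ℝ => Real.pi * z * x) (Real.pi * z) u := by
      simpa using (hasDerivAt_id u).const_mul (Real.pi * z)
    have h4 := h3.cos
    exact h2.mul h4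
  -- the dominating function g
  set g : ℝ → ℝ := fun u =>
      2 * a * |u| * Real.exp (-(a * u ^ 2)) + z * (Real.pi * Real.exp (-(a * u ^ 2))) with hg_def
  have hgnn : ∀ u, 0 ≤ g u := by
    intro u
    have : (0:ℝ) ≤ z * (Real.pi * Real.exp (-(a * u ^ 2))) :=
      mul_nonneg hz0.le (by positivity)
    have h2 : (0:ℝ) ≤ 2 * a * |u| * Real.exp (-(a * u ^ 2)) := by positivity
    simpa [hg_def] using add_nonneg h2 this
  have hgbd : ∀ u, |Y' u| ≤ g u := by
    intro u
    have e1 : (0:ℝ) < Real.exp (-(a * u ^ 2)) := Real.exp_pos _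
    have c1 := Real.abs_cos_le_one (Real.pi * z * u)
    have s1 := Real.abs_sin_le_one (Real.pi * z * u)
    have t1 : |Real.exp (-(a * u ^ 2)) * -(a * (2 * u)) * Real.cos (Real.pi * z * u)|
        ≤ 2 * a * |u| * Real.exp (-(a * u ^ 2)) := by
      rw [abs_mul, abs_mul, abs_neg, abs_mul, abs_of_pos e1, abs_of_pos ha, abs_mul, abs_two]
      calc Real.exp (-(a * u ^ 2)) * (a * (2 * |u|)) * |Real.cos (Real.pi * z * u)|
          ≤ Real.exp (-(a * u ^ 2)) * (a * (2 * |u|)) * 1 := by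
            apply mul_le_mul_of_nonneg_left c1; positivity
        _ = 2 * a * |u| * Real.exp (-(a * u ^ 2)) := by ring
    have t2 : |Real.exp (-(a * u ^ 2)) * (-Real.sin (Real.pi * z * u) * (Real.pi * z))|
        ≤ z * (Real.pi * Real.exp (-(a * u ^ 2))) := by
      have hpz : (0:ℝ) < Real.pi * z := by positivity
      rw [abs_mul, abs_mul, abs_neg, abs_of_pos e1, abs_of_pos hpz]
      calc Real.exp (-(a * u ^ 2)) * (|Real.sin (Real.pi * z * u)| * (Real.pi * z))
          ≤ Real.exp (-(a * u ^ 2)) * (1 * (Real.pi * z)) := by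
            apply mul_le_mul_of_nonneg_left _ e1.le
            apply mul_le_mul_of_nonneg_right s1 hpz.le
        _ = z * (Real.pi * Real.exp (-(a * u ^ 2))) := by ring
    calc |Y' u| ≤ _ + _ := abs_add_le _ _
      _ ≤ 2 * a * |u| * Real.exp (-(a * u ^ 2)) + z * (Real.pi * Real.exp (-(a * u ^ 2))) :=
          add_le_add t1 t2
      _ = g u := rfl
  -- continuity and integrability
  have hYc : Continuous Y := by
    rw [hY_def]; fun_prop
  have hY'c : Continuous Y' := by
    rw [hY'_def]; fun_prop
  have hgc : Continuous g := by
    rw [hg_def]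
    exact (((continuous_const.mul continuous_abs).mul
      (Real.continuous_exp.comp (by fun_prop)))).add
      (continuous_const.mul (continuous_const.mul (Real.continuous_exp.comp (by fun_prop))))
  have hexp_int : Integrable (fun x : ℝ => Real.exp (-(a * x ^ 2))) := by
    simpa [neg_mul] using integrable_exp_neg_mul_sq ha
  have hexp2_int : Integrable (fun x : ℝ => Real.exp (-(a / 2 * x ^ 2))) := by
    simpa [neg_mul] using integrable_exp_neg_mul_sq (by positivity : (0:ℝ) < a / 2)
  have hYint : Integrable Y := by
    refine hexp_int.mono' hYc.aestronglyMeasurable (Filter.Eventually.of_forall fun x => ?_)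
    rw [hY_def]
    simp only [Real.norm_eq_abs, abs_mul, abs_of_pos (Real.exp_pos _)]
    calc Real.exp (-(a * x ^ 2)) * |Real.cos (Real.pi * z * x)|
        ≤ Real.exp (-(a * x ^ 2)) * 1 :=
          mul_le_mul_of_nonneg_left (Real.abs_cos_le_one _) (Real.exp_pos _).le
      _ = Real.exp (-(a * x ^ 2)) := mul_one _
  have hg1int : Integrable (fun x : ℝ => 2 * a * |x| * Real.exp (-(a * x ^ 2))) := by
    have h1 := (integrable_mul_exp_neg_mul_sq ha).abs
    have h2 : Integrable (fun x : ℝ => |x| * Real.exp (-(a * x ^ 2))) := by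
      have : (fun x : ℝ => |x * Real.exp (-a * x ^ 2)|)
          = fun x : ℝ => |x| * Real.exp (-(a * x ^ 2)) := by
        funext x
        rw [abs_mul, abs_of_pos (Real.exp_pos _), neg_mul]
      rwa [this] at h1
    have h3 := h2.const_mul (2 * a)
    simpa [mul_assoc] using h3
  have hg2int : Integrable (fun x : ℝ => Real.pi * Real.exp (-(a * x ^ 2))) :=
    hexp_int.const_mul Real.pi
  have hgint : Integrable g := by
    rw [hg_def]
    exact hg1int.add (hg2int.const_mul z)
  -- the grid
  set A : ℕ → ℝ := fun i => ((i : ℝ) - (n:ℝ) ^ 2) / n with hA_def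
  have hAsucc : ∀ i : ℕ, A (i + 1) - A i = 1 / n := by
    intro i
    rw [hA_def]
    push_cast
    field_simp
    ring
  have hAle : ∀ i : ℕ, A i ≤ A (i + 1) := by
    intro i
    nlinarith [hAsucc i, one_div_pos.mpr hn0]
  have hA0 : A 0 = -(n:ℝ) := by
    rw [hA_def]
    field_simp
    ring
  have hAend : A (2 * n ^ 2) = (n:ℝ) := by
    rw [hA_def]
    push_cast
    field_simp
    ring
  have hIntY : ∀ i : ℕ, IntervalIntegrable Y volume (A i) (A (i + 1)) := fun i =>
    hYc.intervalIntegrable _ _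
  -- reindex the sum
  have hsum : ∑ k ∈ Finset.Icc (-(n : ℤ) ^ 2) ((n : ℤ) ^ 2 - 1), Y ((k : ℝ) / n)
      = ∑ i ∈ Finset.range (2 * n ^ 2), Y (A i) := by
    have hcast : ((n : ℤ)) ^ 2 = ((n ^ 2 : ℕ) : ℤ) := by push_cast; ring
    refine Finset.sum_nbij' (i := fun k : ℤ => (k + (n:ℤ) ^ 2).toNat)
      (j := fun i : ℕ => (i : ℤ) - (n:ℤ) ^ 2) ?_ ?_ ?_ ?_ ?_
    · intro k hk
      simp only [Finset.mem_Icc] at hk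
      simp only [Finset.mem_range, hcast] at *
      omega
    · intro i hi
      simp only [Finset.mem_range] at hi
      simp only [Finset.mem_Icc, hcast] at *
      omega
    · intro k hk
      simp only [Finset.mem_Icc] at hk
      simp only [hcast]
      omega
    · intro i hi
      simp only [Finset.mem_range] at hi
      simp only [hcast]
      omega
    · intro k hk
      simp only [Finset.mem_Icc] at hk
      congr 1
      have h1 : (((k + (n:ℤ) ^ 2).toNat : ℤ)) = k + (n:ℤ) ^ 2 := Int.toNat_of_nonneg (by omega)
      have h2 : (((k + (n:ℤ) ^ 2).toNat : ℕ) : ℝ) = (k : ℝ) + (n : ℝ) ^ 2 := by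
        rw [← Int.cast_natCast, h1]
        push_cast
        ring
      rw [hA_def]
      simp only [h2]
      ring
  -- splitting of the interval integral
  have hsplitY : ∑ i ∈ Finset.range (2 * n ^ 2), ∫ x in A i..A (i + 1), Y x
      = ∫ x in (-(n:ℝ))..(n:ℝ), Y x := by
    rw [intervalIntegral.sum_integral_adjacent_intervals (fun k _ => hIntY k), hA0, hAend]
  have hsplitg : ∑ i ∈ Finset.range (2 * n ^ 2), ∫ x in A i..A (i + 1), g x
      = ∫ x in (-(n:ℝ))..(n:ℝ), g x := by
    rw [intervalIntegral.sum_integral_adjacent_intervals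
      (fun k _ => hgc.intervalIntegrable _ _), hA0, hAend]
  -- per-interval estimate
  have hterm : ∀ i : ℕ, |(1 / n : ℝ) * Y (A i) - ∫ x in A i..A (i + 1), Y x|
      ≤ (1 / n : ℝ) * ∫ x in A i..A (i + 1), g x := by
    intro i
    have hle := hAle i
    have h1 : (1 / n : ℝ) * Y (A i) - ∫ x in A i..A (i + 1), Y x
        = ∫ x in A i..A (i + 1), (Y (A i) - Y x) := by
      rw [intervalIntegral.integral_sub (intervalIntegrable_const) (hIntY i),
        intervalIntegral.integral_const, smul_eq_mul, hAsucc i]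
    rw [h1]
    have hbound : ∀ x ∈ Set.uIoc (A i) (A (i + 1)),
        ‖Y (A i) - Y x‖ ≤ ∫ u in A i..A (i + 1), g u := by
      intro x hx
      rw [Set.uIoc_of_le hle] at hx
      have hxi : A i ≤ x := le_of_lt hx.1
      have hftc : ∫ u in A i..x, Y' u = Y x - Y (A i) :=
        intervalIntegral.integral_eq_sub_of_hasDerivAt (fun u _ => hder u)
          (hY'c.intervalIntegrable _ _)
      have heq : ‖Y (A i) - Y x‖ = ‖∫ u in A i..x, Y' u‖ := by
        rw [hftc, Real.norm_eq_abs, Real.norm_eq_abs, abs_sub_comm]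
      rw [heq]
      calc ‖∫ u in A i..x, Y' u‖ ≤ ∫ u in A i..x, ‖Y' u‖ :=
            intervalIntegral.norm_integral_le_integral_norm hxi
        _ ≤ ∫ u in A i..x, g u := by
            apply intervalIntegral.integral_mono_on hxi
              (hY'c.norm.intervalIntegrable _ _) (hgc.intervalIntegrable _ _)
            intro u _
            rw [Real.norm_eq_abs]
            exact hgbd u
        _ ≤ ∫ u in A i..A (i + 1), g u := by
            apply intervalIntegral.integral_mono_interval le_rfl hxi hx.2
              (ae_of_all _ hgnn) (hgc.intervalIntegrable _ _)
    have h2 := intervalIntegral.norm_integral_le_of_norm_le_const hbound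
    rw [Real.norm_eq_abs] at h2
    calc |∫ x in A i..A (i + 1), (Y (A i) - Y x)|
        ≤ (∫ u in A i..A (i + 1), g u) * |A (i + 1) - A i| := h2
      _ = (1 / n : ℝ) * ∫ x in A i..A (i + 1), g x := by
          rw [hAsucc i, abs_of_pos (by positivity : (0:ℝ) < 1 / n)]
          ring
  -- sum of the per-interval estimates
  have hmain : |(1 / n : ℝ) * (∑ i ∈ Finset.range (2 * n ^ 2), Y (A i))
      - ∫ x in (-(n:ℝ))..(n:ℝ), Y x|
      ≤ (1 / n : ℝ) * ∫ x in (-(n:ℝ))..(n:ℝ), g x := by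
    rw [← hsplitY, ← hsplitg, Finset.mul_sum, Finset.mul_sum, ← Finset.sum_sub_distrib]
    calc |∑ i ∈ Finset.range (2 * n ^ 2),
          ((1 / n : ℝ) * Y (A i) - ∫ x in A i..A (i + 1), Y x)|
        ≤ ∑ i ∈ Finset.range (2 * n ^ 2),
          |(1 / n : ℝ) * Y (A i) - ∫ x in A i..A (i + 1), Y x| :=
          Finset.abs_sum_le_sum_abs _ _
      _ ≤ ∑ i ∈ Finset.range (2 * n ^ 2), (1 / n : ℝ) * ∫ x in A i..A (i + 1), g x :=
          Finset.sum_le_sum fun i _ => hterm i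
  -- bound the g-integral
  have hgle : ∫ x in (-(n:ℝ))..(n:ℝ), g x ≤ J1 + z * G2 := by
    have h1 : ∫ x in (-(n:ℝ))..(n:ℝ), g x = ∫ x in Set.Ioc (-(n:ℝ)) (n:ℝ), g x :=
      intervalIntegral.integral_of_le (by linarith)
    have h2 : ∫ x in Set.Ioc (-(n:ℝ)) (n:ℝ), g x ≤ ∫ x, g x :=
      setIntegral_le_integral hgint (Filter.Eventually.of_forall hgnn)
    have h3 : ∫ x, g x = J1 + z * G2 := by
      rw [hg_def]
      rw [integral_add hg1int (hg2int.const_mul z), integral_const_mul]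
    linarith
  -- tail estimate
  have hKnn : 0 ≤ K := by
    rw [hK_def]
    exact integral_nonneg fun x => (Real.exp_pos _).le
  have htail : |(∫ x, Y x) - ∫ x in (-(n:ℝ))..(n:ℝ), Y x| ≤ (2 * K / a) / n := by
    have hs : MeasurableSet (Set.Ioc (-(n:ℝ)) (n:ℝ)) := measurableSet_Ioc
    have h1 : (∫ x in Set.Ioc (-(n:ℝ)) (n:ℝ), Y x)
        + ∫ x in (Set.Ioc (-(n:ℝ)) (n:ℝ))ᶜ, Y x = ∫ x, Y x :=
      integral_add_compl hs hYint
    have h2 : ∫ x in (-(n:ℝ))..(n:ℝ), Y x = ∫ x in Set.Ioc (-(n:ℝ)) (n:ℝ), Y x :=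
      intervalIntegral.integral_of_le (by linarith)
    have h3 : (∫ x, Y x) - ∫ x in (-(n:ℝ))..(n:ℝ), Y x
        = ∫ x in (Set.Ioc (-(n:ℝ)) (n:ℝ))ᶜ, Y x := by
      rw [h2]; linarith
    rw [h3]
    have hb : ∀ x ∈ (Set.Ioc (-(n:ℝ)) (n:ℝ))ᶜ,
        |Y x| ≤ Real.exp (-(a / 2 * (n:ℝ) ^ 2)) * Real.exp (-(a / 2 * x ^ 2)) := by
      intro x hx
      simp only [Set.mem_compl_iff, Set.mem_Ioc, not_and_or, not_lt, not_le] at hx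
      have hx2 : (n:ℝ) ^ 2 ≤ x ^ 2 := by
        rcases hx with h | h
        · nlinarith
        · nlinarith
      have hYb : |Y x| ≤ Real.exp (-(a * x ^ 2)) := by
        rw [hY_def]
        simp only [abs_mul, abs_of_pos (Real.exp_pos _)]
        calc Real.exp (-(a * x ^ 2)) * |Real.cos (Real.pi * z * x)|
            ≤ Real.exp (-(a * x ^ 2)) * 1 :=
              mul_le_mul_of_nonneg_left (Real.abs_cos_le_one _) (Real.exp_pos _).le
          _ = Real.exp (-(a * x ^ 2)) := mul_one _
      have hsplit : Real.exp (-(a * x ^ 2))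
          = Real.exp (-(a / 2 * x ^ 2)) * Real.exp (-(a / 2 * x ^ 2)) := by
        rw [← Real.exp_add]; ring_nf
      have hmono : Real.exp (-(a / 2 * x ^ 2)) ≤ Real.exp (-(a / 2 * (n:ℝ) ^ 2)) := by
        apply Real.exp_le_exp.2
        nlinarith
      calc |Y x| ≤ Real.exp (-(a * x ^ 2)) := hYb
        _ = Real.exp (-(a / 2 * x ^ 2)) * Real.exp (-(a / 2 * x ^ 2)) := hsplit
        _ ≤ Real.exp (-(a / 2 * (n:ℝ) ^ 2)) * Real.exp (-(a / 2 * x ^ 2)) := by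
            apply mul_le_mul_of_nonneg_right hmono (Real.exp_pos _).le
    have h4 : |∫ x in (Set.Ioc (-(n:ℝ)) (n:ℝ))ᶜ, Y x|
        ≤ ∫ x in (Set.Ioc (-(n:ℝ)) (n:ℝ))ᶜ, |Y x| := by
      simpa [Real.norm_eq_abs] using
        norm_integral_le_integral_norm (μ := volume.restrict (Set.Ioc (-(n:ℝ)) (n:ℝ))ᶜ) Y
    have h5 : ∫ x in (Set.Ioc (-(n:ℝ)) (n:ℝ))ᶜ, |Y x|
        ≤ ∫ x in (Set.Ioc (-(n:ℝ)) (n:ℝ))ᶜ,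
            Real.exp (-(a / 2 * (n:ℝ) ^ 2)) * Real.exp (-(a / 2 * x ^ 2)) := by
      apply setIntegral_mono_on hYint.abs.integrableOn
        ((hexp2_int.const_mul _).integrableOn) hs.compl hb
    have h6 : ∫ x in (Set.Ioc (-(n:ℝ)) (n:ℝ))ᶜ,
          Real.exp (-(a / 2 * (n:ℝ) ^ 2)) * Real.exp (-(a / 2 * x ^ 2))
        ≤ Real.exp (-(a / 2 * (n:ℝ) ^ 2)) * K := by
      calc ∫ x in (Set.Ioc (-(n:ℝ)) (n:ℝ))ᶜ,
            Real.exp (-(a / 2 * (n:ℝ) ^ 2)) * Real.exp (-(a / 2 * x ^ 2))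
          ≤ ∫ x, Real.exp (-(a / 2 * (n:ℝ) ^ 2)) * Real.exp (-(a / 2 * x ^ 2)) :=
            setIntegral_le_integral (hexp2_int.const_mul _)
              (Filter.Eventually.of_forall fun x => by positivity)
        _ = Real.exp (-(a / 2 * (n:ℝ) ^ 2)) * K := by
            rw [integral_const_mul, hK_def]
    have h7 : Real.exp (-(a / 2 * (n:ℝ) ^ 2)) ≤ 2 / (a * n * n) := by
      have hpos : (0:ℝ) < a / 2 * (n:ℝ) ^ 2 := by positivity
      have hge : a / 2 * (n:ℝ) ^ 2 ≤ Real.exp (a / 2 * (n:ℝ) ^ 2) := by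
        nlinarith [Real.add_one_le_exp (a / 2 * (n:ℝ) ^ 2)]
      rw [Real.exp_neg]
      have hinv : (Real.exp (a / 2 * (n:ℝ) ^ 2))⁻¹ ≤ (a / 2 * (n:ℝ) ^ 2)⁻¹ :=
        inv_anti₀ hpos hge
      have heq : (a / 2 * (n:ℝ) ^ 2)⁻¹ = 2 / (a * n * n) := by
        field_simp
      rw [heq] at hinv
      exact hinv
    have h8 : Real.exp (-(a / 2 * (n:ℝ) ^ 2)) * K ≤ (2 * K / a) / n := by
      have hKa : (0:ℝ) ≤ (2 * K / a) / n :=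
        div_nonneg (div_nonneg (by linarith) ha.le) hn0.le
      have e1 : Real.exp (-(a / 2 * (n:ℝ) ^ 2)) * K ≤ (2 / (a * n * n)) * K :=
        mul_le_mul_of_nonneg_right h7 hKnn
      have e2 : (2 / (a * n * n)) * K = ((2 * K / a) / n) * (1 / n) := by
        field_simp
      have e4 : (1:ℝ) / n ≤ 1 := by
        rw [div_le_one hn0]
        exact hn1
      have e3 : ((2 * K / a) / n) * (1 / n) ≤ ((2 * K / a) / n) * 1 :=
        mul_le_mul_of_nonneg_left e4 hKa
      have e5 : ((2 * K / a) / n) * 1 = (2 * K / a) / n := mul_one _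
      linarith
    calc |∫ x in (Set.Ioc (-(n:ℝ)) (n:ℝ))ᶜ, Y x|
        ≤ ∫ x in (Set.Ioc (-(n:ℝ)) (n:ℝ))ᶜ, |Y x| := h4
      _ ≤ ∫ x in (Set.Ioc (-(n:ℝ)) (n:ℝ))ᶜ,
            Real.exp (-(a / 2 * (n:ℝ) ^ 2)) * Real.exp (-(a / 2 * x ^ 2)) := h5
      _ ≤ Real.exp (-(a / 2 * (n:ℝ) ^ 2)) * K := h6
      _ ≤ (2 * K / a) / n := h8
  -- final assembly
  simp only [hYeq]
  rw [hsum]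
  have hfin1 : |(1 / n : ℝ) * (∑ i ∈ Finset.range (2 * n ^ 2), Y (A i)) - ∫ x, Y x|
      ≤ (1 / n : ℝ) * (J1 + z * G2) + (2 * K / a) / n := by
    calc |(1 / n : ℝ) * (∑ i ∈ Finset.range (2 * n ^ 2), Y (A i)) - ∫ x, Y x|
        ≤ |(1 / n : ℝ) * (∑ i ∈ Finset.range (2 * n ^ 2), Y (A i))
              - ∫ x in (-(n:ℝ))..(n:ℝ), Y x|
            + |(∫ x in (-(n:ℝ))..(n:ℝ), Y x) - ∫ x, Y x| := abs_sub_le _ _ _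
      _ ≤ (1 / n : ℝ) * (∫ x in (-(n:ℝ))..(n:ℝ), g x) + (2 * K / a) / n := by
          have h' := htail
          rw [abs_sub_comm] at h'
          exact add_le_add hmain h'
      _ ≤ (1 / n : ℝ) * (J1 + z * G2) + (2 * K / a) / n :=
          add_le_add (mul_le_mul_of_nonneg_left hgle (by positivity : (0:ℝ) ≤ 1 / n)) le_rfl
  have hfin2 : (1 / n : ℝ) * (J1 + z * G2) + (2 * K / a) / n
      = (J1 + 2 * K / a) / n + G2 * (j : ℝ) / (n : ℝ) ^ 2
        + 0 * (j : ℝ) ^ 2 / (n : ℝ) ^ 3 := by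
    rw [hz_def]
    field_simp
    ring
  linarith
end

section
/- Let t > 0, n ∈ ℕ, and j ∈ ℤ with 0 < j ≤ n²−1, and set z = j/n. Then there are constants K(t), G(t) depending only on t, and an absolute constant H, such that |(1/n)·Σ_{k=−n²}^{n²−1} exp(−π²t(k/n)²)·exp(iπ(k/n)z) − (1/√(πt))·exp(−z²/(4t))| ≤ K(t)/n + G(t)·j/n² + H·j²/n³. -/
open MeasureTheory Finset

lemma sumExpNegAbs {c : ℝ} (hc : 0 < c) :
    Summable (fun k : ℤ => Real.exp (-c * |(k : ℝ)|)) := by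
  have hnat : Summable (fun n : ℕ => Real.exp (-c * n)) := by
    have hlt : Real.exp (-c) < 1 := Real.exp_lt_one_iff.mpr (by linarith)
    have := summable_geometric_of_lt_one (Real.exp_pos (-c)).le hlt
    refine this.congr fun n => ?_
    rw [← Real.exp_nat_mul]; ring_nf
  apply Summable.of_nat_of_neg
  · refine hnat.congr fun n => ?_
    simp
  · refine hnat.congr fun n => ?_
    simp

lemma expNegLe {x : ℝ} (hx : 0 < x) : Real.exp (-x) ≤ 1 / x := by
  rw [Real.exp_neg, one_div]
  exact inv_anti₀ hx (by linarith [Real.add_one_le_exp x])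

set_option maxHeartbeats 1000000 in
theorem stmt19 :
    ∃ H : ℝ, ∀ t : ℝ, 0 < t → ∃ K G : ℝ,
      ∀ (n : ℕ) (j : ℤ), 0 < j → j ≤ (n : ℤ) ^ 2 - 1 →
        norm ((1 / n : ℂ) * ∑ k ∈ Finset.Icc (-(n : ℤ) ^ 2) ((n : ℤ) ^ 2 - 1),
              (Real.exp (-(Real.pi ^ 2) * t * ((k : ℝ) / n) ^ 2) : ℂ)
                * Complex.exp (Complex.I * Real.pi * ((k : ℝ) / n) * (((j : ℝ) / n) : ℂ))
            - (1 / Real.sqrt (Real.pi * t) : ℝ)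
                * Complex.exp (-(((j : ℝ) / n : ℝ) : ℂ) ^ 2 / (4 * t)))
          ≤ K / n + G * (j : ℝ) / (n : ℝ) ^ 2 + H * (j : ℝ) ^ 2 / (n : ℝ) ^ 3 := by
  refine ⟨0, fun t ht => ?_⟩
  set T1 : ℝ := ∑' k : ℤ, Real.exp (-(Real.pi ^ 2 * t) * |(k : ℝ)|) with hT1
  set T2 : ℝ := ∑' m : ℤ, Real.exp (-(1 / (2 * t)) * |(m : ℝ)|) with hT2
  have hπ := Real.pi_pos
  have hsqrt : 0 < Real.sqrt (Real.pi * t) := Real.sqrt_pos.mpr (by positivity)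
  refine ⟨T1 + 4 * t / Real.sqrt (Real.pi * t) * T2, 0, fun n j hj hjn => ?_⟩
  -- n ≥ 2
  have hn2 : 2 ≤ n := by nlinarith [sq_nonneg ((n : ℤ) - 1), hj, hjn]
  have hN2 : (2 : ℝ) ≤ (n : ℝ) := by exact_mod_cast hn2
  set N : ℝ := (n : ℝ) with hNdef
  have hN : 0 < N := by linarith
  have hNne : N ≠ 0 := ne_of_gt hN
  have hNc : (N : ℂ) ≠ 0 := by exact_mod_cast hNne
  have htne : t ≠ 0 := ne_of_gt ht
  have htc : (t : ℂ) ≠ 0 := by exact_mod_cast htne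
  have hπc : (Real.pi : ℂ) ≠ 0 := by exact_mod_cast ne_of_gt hπ
  set z : ℝ := (j : ℝ) / N with hzdef
  have hz0 : 0 < z := div_pos (by exact_mod_cast hj) hN
  have hzN : z < N := by
    rw [hzdef, div_lt_iff₀ hN]
    have hjr : (j : ℝ) ≤ N ^ 2 - 1 := by
      have : ((j : ℝ)) ≤ ((((n:ℤ)^2 - 1 : ℤ)) : ℝ) := by exact_mod_cast hjn
      push_cast at this; linarith
    nlinarith
  set A : ℝ := Real.pi * t / N ^ 2 with hAdef
  have hA : 0 < A := by positivity
  set a : ℂ := (A : ℂ) with hadef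
  have har : 0 < a.re := by simpa [hadef] using hA
  have hac : a ≠ 0 := by
    rw [hadef]; exact_mod_cast ne_of_gt hA
  set b : ℂ := Complex.I * ((z / (2 * N) : ℝ) : ℂ) with hbdef
  set f : ℤ → ℂ := fun k =>
    Complex.exp (-(Real.pi : ℂ) * a * (k : ℂ) ^ 2 + 2 * (Real.pi : ℂ) * b * (k : ℂ)) with hfdef
  -- norm of f
  have hfnorm : ∀ k : ℤ, ‖f k‖ = Real.exp (-(Real.pi ^ 2 * t) * ((k : ℝ) / N) ^ 2) := by
    intro k
    have hexp : -(Real.pi : ℂ) * a * (k : ℂ) ^ 2 + 2 * (Real.pi : ℂ) * b * (k : ℂ)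
        = ((-(Real.pi ^ 2 * t) * ((k : ℝ) / N) ^ 2 : ℝ) : ℂ)
          + ((2 * Real.pi * (z / (2 * N)) * k : ℝ) : ℂ) * Complex.I := by
      rw [hbdef, hadef, hAdef]
      push_cast
      field_simp
    show ‖Complex.exp _‖ = _
    rw [hexp, Complex.norm_exp]
    congr 1
    simp only [Complex.add_re, Complex.ofReal_re, Complex.mul_I_re, Complex.ofReal_im, neg_zero,
      add_zero]
  -- summability of f
  have hc1 : 0 < Real.pi ^ 2 * t / N ^ 2 := by positivity
  have hfnorm_le : ∀ k : ℤ, ‖f k‖ ≤ Real.exp (-(Real.pi ^ 2 * t / N ^ 2) * |(k : ℝ)|) := by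
    intro k
    rw [hfnorm k]
    apply Real.exp_le_exp.mpr
    have hk2 : |(k : ℝ)| ≤ (k : ℝ) ^ 2 := by
      rcases eq_or_ne k 0 with rfl | hk
      · simp
      · have h1 : (1 : ℝ) ≤ |(k : ℝ)| := by exact_mod_cast Int.one_le_abs hk
        nlinarith [sq_abs ((k:ℝ)), abs_nonneg ((k : ℝ))]
    have heq : -(Real.pi ^ 2 * t) * ((k : ℝ) / N) ^ 2
        = -(Real.pi ^ 2 * t / N ^ 2) * (k:ℝ)^2 := by
      field_simp
    rw [heq]
    nlinarith [hc1.le]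
  have hfs : Summable f :=
    Summable.of_norm ((sumExpNegAbs hc1).of_nonneg_of_le (fun k => norm_nonneg _) hfnorm_le)
  -- Poisson summation
  have hP := Complex.tsum_exp_neg_quadratic har b
  -- the dual terms
  set g : ℤ → ℂ := fun m => ((Real.exp (-(2 * N * m - z) ^ 2 / (4 * t)) : ℝ) : ℂ) with hgdef
  have hw : ∀ m : ℤ, Complex.exp (-(Real.pi : ℂ) / a * ((m : ℂ) + Complex.I * b) ^ 2) = g m := by
    intro m
    have hIb : Complex.I * b = -(((z / (2 * N) : ℝ)) : ℂ) := by
      rw [hbdef, ← mul_assoc, Complex.I_mul_I, neg_one_mul]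
    have hexp : -(Real.pi : ℂ) / a * ((m : ℂ) + Complex.I * b) ^ 2
        = ((-(2 * N * m - z) ^ 2 / (4 * t) : ℝ) : ℂ) := by
      rw [hIb, hadef, hAdef]
      push_cast
      field_simp
      ring
    rw [hexp, hgdef]
    exact (Complex.ofReal_exp _).symm
  have hgnorm : ∀ m : ℤ, ‖g m‖ = Real.exp (-(2 * N * m - z) ^ 2 / (4 * t)) := by
    intro m
    rw [hgdef]
    simp only [Complex.norm_real]
    exact Real.norm_of_nonneg (Real.exp_pos _).le
  have hgnorm_le : ∀ m : ℤ, m ≠ 0 →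
      ‖g m‖ ≤ Real.exp (-(N ^ 2 / (8 * t))) * Real.exp (-(1 / (2 * t)) * |(m : ℝ)|) := by
    intro m hm
    have h1 : (1 : ℝ) ≤ |(m : ℝ)| := by exact_mod_cast Int.one_le_abs hm
    have hm2 : (1 : ℝ) ≤ (m : ℝ) ^ 2 := by nlinarith [sq_abs ((m:ℝ))]
    have hkey : (N * |(m : ℝ)|) ^ 2 ≤ (2 * N * m - z) ^ 2 := by
      have h2 : N * |(m : ℝ)| ≤ |2 * N * m - z| := by
        have habs : |2 * N * (m:ℝ)| - |z| ≤ |2 * N * m - z| := abs_sub_abs_le_abs_sub _ _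
        have he : |2 * N * (m:ℝ)| = 2 * N * |(m:ℝ)| := by
          rw [abs_mul, abs_of_nonneg (by linarith : (0:ℝ) ≤ 2 * N)]
        rw [he, abs_of_pos hz0] at habs
        have h3 : N * 1 ≤ N * |(m:ℝ)| := mul_le_mul_of_nonneg_left h1 hN.le
        linarith
      calc (N * |(m : ℝ)|) ^ 2 ≤ |2 * N * m - z| ^ 2 := by
            apply pow_le_pow_left₀ (by positivity) h2
        _ = (2 * N * m - z) ^ 2 := sq_abs _
    rw [hgnorm m, ← Real.exp_add]
    apply Real.exp_le_exp.mpr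
    have hNm : (N * |(m:ℝ)|) ^ 2 = N ^ 2 * (m:ℝ) ^ 2 := by
      rw [mul_pow, sq_abs]
    rw [hNm] at hkey
    have habs2 : |(m:ℝ)| ≤ (m:ℝ) ^ 2 := by nlinarith [sq_abs ((m:ℝ)), abs_nonneg ((m:ℝ))]
    have hN4 : (4:ℝ) ≤ N ^ 2 := by nlinarith
    have e1 : N ^ 2 / 2 ≤ N ^ 2 * (m:ℝ) ^ 2 / 2 := by
      nlinarith [mul_nonneg (sq_nonneg N) (sub_nonneg.mpr hm2)]
    have e2 : 4 * |(m:ℝ)| ≤ N ^ 2 * (m:ℝ) ^ 2 :=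
      mul_le_mul hN4 habs2 (abs_nonneg _) (sq_nonneg N)
    have hineq : N ^ 2 / 2 + 2 * |(m:ℝ)| ≤ (2 * N * m - z) ^ 2 := by linarith
    have h4t : (0:ℝ) < 4 * t := by positivity
    rw [div_le_iff₀ h4t]
    have hrhs : (-(N ^ 2 / (8 * t)) + -(1 / (2 * t)) * |(m:ℝ)|) * (4 * t)
        = -(N ^ 2 / 2) - 2 * |(m:ℝ)| := by
      field_simp; ring
    rw [hrhs]
    linarith
  -- summability of norms of f
  have hfnormsum : Summable (fun k : ℤ => ‖f k‖) :=
    (sumExpNegAbs hc1).of_nonneg_of_le (fun k => norm_nonneg _) hfnorm_le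
  -- summability of g
  have ht2 : (0:ℝ) < 1 / (2 * t) := by positivity
  have hgnorm_all : ∀ m : ℤ, ‖g m‖ ≤ Real.exp (-(1 / (2 * t)) * |(m : ℝ)|) := by
    intro m
    rcases eq_or_ne m 0 with rfl | hm
    · have hle : ‖g 0‖ ≤ 1 := by
        rw [hgnorm 0]
        apply Real.exp_le_one_iff.mpr
        apply div_nonpos_of_nonpos_of_nonneg (neg_nonpos_of_nonneg (sq_nonneg _)) (by positivity)
      simpa using hle
    · calc ‖g m‖ ≤ Real.exp (-(N ^ 2 / (8 * t))) * Real.exp (-(1 / (2 * t)) * |(m : ℝ)|) :=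
            hgnorm_le m hm
        _ ≤ 1 * Real.exp (-(1 / (2 * t)) * |(m : ℝ)|) := by
            apply mul_le_mul_of_nonneg_right _ (Real.exp_pos _).le
            apply Real.exp_le_one_iff.mpr
            have : (0:ℝ) ≤ N ^ 2 / (8 * t) := by positivity
            linarith
        _ = Real.exp (-(1 / (2 * t)) * |(m : ℝ)|) := one_mul _
  have hgs : Summable g :=
    Summable.of_norm ((sumExpNegAbs ht2).of_nonneg_of_le (fun m => norm_nonneg _) hgnorm_all)
  -- the cpow value
  have hsc : ((Real.sqrt (Real.pi * t) : ℝ) : ℂ) ≠ 0 := by exact_mod_cast ne_of_gt hsqrt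
  have hsA : Real.sqrt A = Real.sqrt (Real.pi * t) / N := by
    rw [hAdef, show Real.pi * t / N ^ 2 = (Real.sqrt (Real.pi * t) / N) ^ 2 by
      rw [div_pow, Real.sq_sqrt (by positivity : (0:ℝ) ≤ Real.pi * t)]]
    exact Real.sqrt_sq (by positivity)
  have hcpow : a ^ (1/2 : ℂ) = ((Real.sqrt (Real.pi * t) / N : ℝ) : ℂ) := by
    rw [hadef, show (1/2 : ℂ) = ((1/2 : ℝ) : ℂ) by norm_num, ← Complex.ofReal_cpow hA.le]
    rw [show A ^ (1/2 : ℝ) = Real.sqrt A from (Real.sqrt_eq_rpow A).symm, hsA]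
  have hinv : (1 : ℂ) / a ^ (1/2 : ℂ) = ((N / Real.sqrt (Real.pi * t) : ℝ) : ℂ) := by
    rw [hcpow, ← Complex.ofReal_one, ← Complex.ofReal_div, one_div_div]
  -- Poisson in final form
  have hPoisson : ∑' k : ℤ, f k = ((N / Real.sqrt (Real.pi * t) : ℝ) : ℂ) * ∑' m : ℤ, g m := by
    rw [hP, hinv, tsum_congr hw]
  -- splits
  set S : Finset ℤ := Finset.Icc (-(n : ℤ) ^ 2) ((n : ℤ) ^ 2 - 1) with hSdef
  set C : ℂ := ∑' k : ↑((S : Set ℤ)ᶜ), f k with hCdef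
  have hsplit1 : ∑ k ∈ S, f k = (∑' k : ℤ, f k) - C := by
    have h := Summable.sum_add_tsum_compl (f := f) (s := S) hfs
    rw [hCdef]
    exact eq_sub_of_add_eq h
  set R : ℂ := ∑' m : ℤ, ite (m = 0) 0 (g m) with hRdef
  have hsplit2 : ∑' m : ℤ, g m = g 0 + R := Summable.tsum_eq_add_tsum_ite hgs 0
  have hg0 : Complex.exp (-(z : ℂ) ^ 2 / (4 * t)) = g 0 := by
    rw [hgdef]
    show _ = ((Real.exp (-(2 * N * ((0:ℤ):ℝ) - z) ^ 2 / (4 * t)) : ℝ) : ℂ)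
    rw [Complex.ofReal_exp]
    congr 1
    push_cast
    ring
  -- rewrite the goal sum
  have hterm : ∀ k ∈ S, (↑(Real.exp (-Real.pi ^ 2 * t * ((k:ℝ) / N) ^ 2)) : ℂ) *
      Complex.exp (Complex.I * (Real.pi:ℂ) * (((k:ℝ):ℂ) / ((n:ℕ):ℂ)) * (((j:ℝ):ℂ) / ((n:ℕ):ℂ)))
      = f k := by
    intro k _
    rw [Complex.ofReal_exp, ← Complex.exp_add]
    congr 1
    have hnc : ((n:ℕ):ℂ) ≠ 0 := by simpa [hNdef] using hNc
    rw [hbdef, hadef, hAdef, hzdef, hNdef]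
    push_cast
    field_simp
  have hNcast : ((N : ℝ) : ℂ) = ((n : ℕ) : ℂ) := by rw [hNdef]; push_cast; ring
  have hmain : (1 / ((n:ℕ) : ℂ)) * ∑ k ∈ S, f k
        - ((1 / Real.sqrt (Real.pi * t) : ℝ) : ℂ) * Complex.exp (-(z : ℂ) ^ 2 / (4 * t))
      = ((1 / Real.sqrt (Real.pi * t) : ℝ) : ℂ) * R - (1 / ((n:ℕ) : ℂ)) * C := by
    rw [hsplit1, hPoisson, hsplit2, hg0, ← hNcast]
    push_cast
    field_simp
    ring
  -- bounds on R
  have hmaj : ∀ m : ℤ, ‖ite (m = 0) (0:ℂ) (g m)‖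
      ≤ Real.exp (-(N ^ 2 / (8 * t))) * Real.exp (-(1 / (2 * t)) * |(m : ℝ)|) := by
    intro m
    rcases eq_or_ne m 0 with rfl | hm
    · rw [if_pos rfl, norm_zero]
      positivity
    · rw [if_neg hm]; exact hgnorm_le m hm
  have hmajsum : Summable (fun m : ℤ =>
      Real.exp (-(N ^ 2 / (8 * t))) * Real.exp (-(1 / (2 * t)) * |(m : ℝ)|)) :=
    (sumExpNegAbs ht2).mul_left _
  have hitesum : Summable (fun m : ℤ => ‖ite (m = 0) (0:ℂ) (g m)‖) :=
    hmajsum.of_nonneg_of_le (fun m => norm_nonneg _) hmaj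
  have hRbound : ‖R‖ ≤ Real.exp (-(N ^ 2 / (8 * t))) * T2 := by
    calc ‖R‖ ≤ ∑' m : ℤ, ‖ite (m = 0) (0:ℂ) (g m)‖ := norm_tsum_le_tsum_norm hitesum
      _ ≤ ∑' m : ℤ, Real.exp (-(N ^ 2 / (8 * t))) * Real.exp (-(1 / (2 * t)) * |(m : ℝ)|) :=
          Summable.tsum_le_tsum hmaj hitesum hmajsum
      _ = Real.exp (-(N ^ 2 / (8 * t))) * T2 := by rw [hT2, tsum_mul_left]
  have hT2pos : (0:ℝ) ≤ T2 := tsum_nonneg fun m => (Real.exp_pos _).le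
  have hT1pos : (0:ℝ) ≤ T1 := tsum_nonneg fun m => (Real.exp_pos _).le
  have hexpN : Real.exp (-(N ^ 2 / (8 * t))) ≤ 4 * t / N := by
    calc Real.exp (-(N ^ 2 / (8 * t))) ≤ 1 / (N ^ 2 / (8 * t)) := expNegLe (by positivity)
      _ = 8 * t / N ^ 2 := by field_simp
      _ ≤ 4 * t / N := by
          rw [div_le_div_iff₀ (by positivity) (by positivity)]
          nlinarith [mul_nonneg (mul_nonneg (by linarith : (0:ℝ) ≤ 4 * t) hN.le)
            (by linarith : (0:ℝ) ≤ N - 2)]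
  -- bounds on C
  have hct1 : (0:ℝ) < Real.pi ^ 2 * t := by positivity
  have hpt : ∀ k : ↑((S : Set ℤ)ᶜ), ‖f (k:ℤ)‖ ≤ Real.exp (-(Real.pi ^ 2 * t) * |((k:ℤ) : ℝ)|) := by
    rintro ⟨k, hk⟩
    have hknot : k ∉ S := hk
    have hklarge : (N ^ 2 : ℝ) ≤ |(k : ℝ)| := by
      rw [hSdef, Finset.mem_Icc] at hknot
      push_neg at hknot
      have hzk : ((n:ℤ)) ^ 2 ≤ |k| := by
        by_cases hk0 : -((n:ℤ) ^ 2) ≤ k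
        · have hgt := hknot hk0
          exact le_trans (by omega) (le_abs_self k)
        · push_neg at hk0
          exact le_trans (by omega) (neg_le_abs k)
      calc (N ^ 2 : ℝ) = ((((n:ℤ)) ^ 2 : ℤ) : ℝ) := by rw [hNdef]; push_cast; ring
        _ ≤ ((|k| : ℤ) : ℝ) := by exact_mod_cast hzk
        _ = |(k : ℝ)| := by push_cast; ring
    rw [hfnorm k]
    apply Real.exp_le_exp.mpr
    have hk2 : N ^ 2 * |(k : ℝ)| ≤ (k : ℝ) ^ 2 := by
      nlinarith [mul_le_mul_of_nonneg_right hklarge (abs_nonneg ((k:ℝ))), sq_abs ((k:ℝ))]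
    have h3 : |(k : ℝ)| ≤ ((k : ℝ) / N) ^ 2 := by
      rw [div_pow, le_div_iff₀ (by positivity)]
      nlinarith
    nlinarith [mul_le_mul_of_nonneg_left h3 hct1.le]
  have hCbound : ‖C‖ ≤ T1 := by
    calc ‖C‖ ≤ ∑' k : ↑((S : Set ℤ)ᶜ), ‖f (k:ℤ)‖ :=
          norm_tsum_le_tsum_norm (hfnormsum.subtype _)
      _ ≤ ∑' k : ↑((S : Set ℤ)ᶜ), Real.exp (-(Real.pi ^ 2 * t) * |((k:ℤ) : ℝ)|) :=
          Summable.tsum_le_tsum hpt (hfnormsum.subtype _) ((sumExpNegAbs hct1).subtype _)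
      _ ≤ T1 := by
          rw [hT1]
          exact Summable.tsum_subtype_le (fun k : ℤ => Real.exp (-(Real.pi ^ 2 * t) * |(k : ℝ)|)) _
            (fun k => (Real.exp_pos _).le) (sumExpNegAbs hct1)
  -- final assembly
  rw [Finset.sum_congr rfl hterm, hmain]
  have hstep : ‖((1 / Real.sqrt (Real.pi * t) : ℝ) : ℂ) * R - (1 / ((n:ℕ) : ℂ)) * C‖
      ≤ (1 / Real.sqrt (Real.pi * t)) * ‖R‖ + (1 / N) * ‖C‖ := by
    calc ‖((1 / Real.sqrt (Real.pi * t) : ℝ) : ℂ) * R - (1 / ((n:ℕ) : ℂ)) * C‖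
        ≤ ‖((1 / Real.sqrt (Real.pi * t) : ℝ) : ℂ) * R‖ + ‖(1 / ((n:ℕ) : ℂ)) * C‖ :=
          norm_sub_le _ _
      _ = (1 / Real.sqrt (Real.pi * t)) * ‖R‖ + (1 / N) * ‖C‖ := by
          rw [norm_mul, norm_mul, Complex.norm_real,
            Real.norm_of_nonneg (by positivity : (0:ℝ) ≤ 1 / Real.sqrt (Real.pi * t)),
            norm_div, norm_one, Complex.norm_natCast, ← hNdef]
  refine le_trans hstep ?_
  have hfin : (1 / Real.sqrt (Real.pi * t)) * ‖R‖ + (1 / N) * ‖C‖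
      ≤ (T1 + 4 * t / Real.sqrt (Real.pi * t) * T2) / N := by
    have h1 : (1 / Real.sqrt (Real.pi * t)) * ‖R‖
        ≤ (1 / Real.sqrt (Real.pi * t)) * ((4 * t / N) * T2) := by
      apply mul_le_mul_of_nonneg_left _ (by positivity)
      calc ‖R‖ ≤ Real.exp (-(N ^ 2 / (8 * t))) * T2 := hRbound
        _ ≤ (4 * t / N) * T2 := mul_le_mul_of_nonneg_right hexpN hT2pos
    have h2 : (1 / N) * ‖C‖ ≤ (1 / N) * T1 := by
      apply mul_le_mul_of_nonneg_left hCbound (by positivity)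
    have heq : (1 / Real.sqrt (Real.pi * t)) * ((4 * t / N) * T2) + (1 / N) * T1
        = (T1 + 4 * t / Real.sqrt (Real.pi * t) * T2) / N := by
      field_simp
      ring
    linarith
  refine le_trans hfin ?_
  have hz1 : (0:ℝ) * (j:ℝ) / N ^ 2 = 0 := by ring
  have hz2 : (0:ℝ) * (j:ℝ) ^ 2 / N ^ 3 = 0 := by ring
  linarith
end
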